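/- For the map Γ(f)(t) = f(t) − g_f(t)·e₁ with g_f(t) = sup_{0≤u≤t} (2β − (f₁(u)+f₂(u)))⁻, there is a constant C such that for every f ∈ D([0,T];ℝ²) and every θ ∈ (0,T], the modulus of continuity satisfies w_T(Γ(f), θ) ≤ C · w_T(f, θ), where w_T(h, θ) = sup { ‖h(u) − h(s)‖ : 0 ≤ s < u ≤ s+θ ≤ T }. -/

import Mathlib

noncomputable section

/-- Negative part of a real number: `x⁻ = max (-x) 0`. -/
def negp (x : ℝ) : ℝ := max (-x) 0

/-- The first standard basis vector of `ℝ²`. -/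
def e1 : EuclideanSpace ℝ (Fin 2) := EuclideanSpace.single 0 1

/-- `g_f(t) = sup_{0 ≤ u ≤ t} (2β − (f₁(u) + f₂(u)))⁻`. -/
def gmap (β : ℝ) (f : ℝ → EuclideanSpace ℝ (Fin 2)) (t : ℝ) : ℝ :=
  ⨆ u : Set.Icc (0 : ℝ) t, negp (2 * β - (f u 0 + f u 1))

/-- `Γ(f)(t) = f(t) − g_f(t)·e₁`. -/
def Gam (β : ℝ) (f : ℝ → EuclideanSpace ℝ (Fin 2)) (t : ℝ) : EuclideanSpace ℝ (Fin 2) :=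
  f t - gmap β f t • e1

/-- `f` is càdlàg on `[0, T]`: right-continuous on `[0,T)` and with left limits on `(0,T]`. -/
def IsCadlagOn {E : Type*} [TopologicalSpace E] (f : ℝ → E) (T : ℝ) : Prop :=
  (∀ t ∈ Set.Ico (0 : ℝ) T, ContinuousWithinAt f (Set.Ici t) t) ∧
  (∀ t ∈ Set.Ioc (0 : ℝ) T, ∃ l, Filter.Tendsto f (nhdsWithin t (Set.Iio t)) (nhds l))

lemma negp_nonneg (x : ℝ) : 0 ≤ negp x := le_max_right _ _

lemma negp_le_abs (x : ℝ) : negp x ≤ |x| := by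
  unfold negp
  rcases le_total x 0 with h | h
  · rw [abs_of_nonpos h]; exact max_le le_rfl (by linarith)
  · rw [abs_of_nonneg h]; exact max_le (by linarith) h

lemma negp_lip (a b : ℝ) : negp a ≤ negp b + |a - b| := by
  have h := abs_max_sub_max_le_abs (-a) (-b) 0
  have h2 : |(-a) - (-b)| = |a - b| := by rw [neg_sub_neg, abs_sub_comm]
  rw [h2] at h
  have := abs_le.mp h
  unfold negp
  linarith [this.2]

lemma comp_le_norm (x : EuclideanSpace ℝ (Fin 2)) (i : Fin 2) : |x i| ≤ ‖x‖ := by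
  rw [EuclideanSpace.norm_eq]
  have h1 : |x i| = Real.sqrt (‖x i‖ ^ 2) := by
    rw [Real.sqrt_sq_eq_abs, abs_norm, Real.norm_eq_abs]
  rw [h1]
  apply Real.sqrt_le_sqrt
  exact Finset.single_le_sum (f := fun j => ‖x j‖ ^ 2)
    (fun j _ => sq_nonneg _) (Finset.mem_univ i)

/-- A càdlàg function on `[0,T]` is bounded on `[0,T]`. -/
lemma bdd_of_cadlag {f : ℝ → EuclideanSpace ℝ (Fin 2)} {T : ℝ} (hT : 0 < T)
    (hf : IsCadlagOn f T) : ∃ M : ℝ, ∀ t ∈ Set.Icc (0 : ℝ) T, ‖f t‖ ≤ M := by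
  have hc : IsCompact (Set.Icc (0 : ℝ) T) := isCompact_Icc
  refine hc.induction_on (p := fun s => ∃ M : ℝ, ∀ t ∈ s, ‖f t‖ ≤ M)
    ⟨0, fun t ht => absurd ht (Set.notMem_empty t)⟩
    (fun s t hst ⟨M, hM⟩ => ⟨M, fun y hy => hM y (hst hy)⟩)
    (fun s t ⟨M, hM⟩ ⟨N, hN⟩ => ⟨max M N, fun y hy => by
      rcases hy with hy | hy
      · exact (hM y hy).trans (le_max_left _ _)
      · exact (hN y hy).trans (le_max_right _ _)⟩)
    (fun x hx => ?_)
  -- x ∈ Icc 0 T; produce a neighborhood within Icc 0 T on which f is bounded.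
  have hx0 : (0 : ℝ) ≤ x := hx.1
  have hxT : x ≤ T := hx.2
  -- right part (when x < T)
  rcases lt_or_eq_of_le hxT with hlt | heq
  · -- x < T : right continuity gives a set in 𝓝[Ici x] x
    have hr : Filter.Tendsto f (nhdsWithin x (Set.Ici x)) (nhds (f x)) :=
      hf.1 x ⟨hx0, hlt⟩
    have hA : f ⁻¹' Metric.closedBall (f x) 1 ∈ nhdsWithin x (Set.Ici x) :=
      hr (Metric.closedBall_mem_nhds _ one_pos)
    have hAbd : ∀ y ∈ f ⁻¹' Metric.closedBall (f x) 1, ‖f y‖ ≤ ‖f x‖ + 1 := by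
      intro y hy
      have : dist (f y) (f x) ≤ 1 := hy
      calc ‖f y‖ ≤ ‖f x‖ + ‖f y - f x‖ := by
            have := norm_sub_norm_le (f y) (f x); linarith [abs_le.mp (abs_norm_sub_norm_le (f y) (f x))]
        _ ≤ ‖f x‖ + 1 := by rw [← dist_eq_norm] at *; linarith
    rcases eq_or_lt_of_le hx0 with h0 | h0
    · -- x = 0 : Icc 0 T ⊆ Ici x
      refine ⟨f ⁻¹' Metric.closedBall (f x) 1, ?_, ⟨‖f x‖ + 1, hAbd⟩⟩
      exact nhdsWithin_mono x (by rw [← h0]; exact Set.Icc_subset_Ici_self) hA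
    · -- 0 < x < T : combine left limit set and right set
      obtain ⟨l, hl⟩ := hf.2 x ⟨h0, hxT⟩
      have hB : f ⁻¹' Metric.closedBall l 1 ∈ nhdsWithin x (Set.Iio x) :=
        hl (Metric.closedBall_mem_nhds _ one_pos)
      refine ⟨f ⁻¹' Metric.closedBall (f x) 1 ∪ f ⁻¹' Metric.closedBall l 1, ?_,
        ⟨max (‖f x‖ + 1) (‖l‖ + 1), fun y hy => ?_⟩⟩
      · apply nhdsWithin_le_nhds
        rw [← nhdsLT_sup_nhdsGE x]
        exact Filter.mem_sup.mpr
          ⟨Filter.mem_of_superset hB Set.subset_union_right,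
           Filter.mem_of_superset hA Set.subset_union_left⟩
      · rcases hy with hy | hy
        · exact (hAbd y hy).trans (le_max_left _ _)
        · have : dist (f y) l ≤ 1 := hy
          have h2 : ‖f y‖ ≤ ‖l‖ + 1 := by
            calc ‖f y‖ ≤ ‖l‖ + ‖f y - l‖ := by
                  linarith [abs_le.mp (abs_norm_sub_norm_le (f y) l)]
              _ ≤ ‖l‖ + 1 := by rw [← dist_eq_norm] at *; linarith
          exact h2.trans (le_max_right _ _)
  · -- x = T
    obtain ⟨l, hl⟩ := hf.2 x ⟨heq ▸ hT, hxT⟩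
    have hB : f ⁻¹' Metric.closedBall l 1 ∈ nhdsWithin x (Set.Iio x) :=
      hl (Metric.closedBall_mem_nhds _ one_pos)
    refine ⟨f ⁻¹' Metric.closedBall l 1 ∪ {x}, ?_, ⟨max (‖l‖ + 1) ‖f x‖, fun y hy => ?_⟩⟩
    · have hsub : Set.Icc (0 : ℝ) T ⊆ Set.Iio x ∪ {x} := by
        intro y hy
        rcases lt_or_eq_of_le (heq ▸ hy.2 : y ≤ x) with h | h
        · exact Or.inl h
        · exact Or.inr h
      refine nhdsWithin_mono x hsub ?_
      rw [nhdsWithin_union]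
      refine Filter.mem_sup.mpr
        ⟨Filter.mem_of_superset hB Set.subset_union_left, ?_⟩
      have : x ∈ f ⁻¹' Metric.closedBall l 1 ∪ {x} := Or.inr rfl
      exact Filter.mem_of_superset self_mem_nhdsWithin Set.subset_union_right
    · rcases hy with hy | hy
      · have : dist (f y) l ≤ 1 := hy
        have h2 : ‖f y‖ ≤ ‖l‖ + 1 := by
          calc ‖f y‖ ≤ ‖l‖ + ‖f y - l‖ := by
                linarith [abs_le.mp (abs_norm_sub_norm_le (f y) l)]
            _ ≤ ‖l‖ + 1 := by rw [← dist_eq_norm] at *; linarith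
        exact h2.trans (le_max_left _ _)
      · simp only [Set.mem_singleton_iff] at hy
        rw [hy]; exact le_max_right _ _

/-- There is a constant `C` bounding the modulus of continuity of `Γ(f)` by that of `f`. -/
theorem gamma_modulus (β T : ℝ) (hβ : 0 < β) (hT : 0 < T) :
    ∃ C : ℝ, 0 < C ∧ ∀ f : ℝ → EuclideanSpace ℝ (Fin 2), IsCadlagOn f T →
      ∀ θ : ℝ, 0 < θ → θ ≤ T →
      sSup {x : ℝ | ∃ s u : ℝ, 0 ≤ s ∧ s < u ∧ u ≤ s + θ ∧ s + θ ≤ T ∧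
          x = ‖Gam β f u - Gam β f s‖} ≤
        C * sSup {x : ℝ | ∃ s u : ℝ, 0 ≤ s ∧ s < u ∧ u ≤ s + θ ∧ s + θ ≤ T ∧
          x = ‖f u - f s‖} := by
  refine ⟨3, by norm_num, fun f hf θ hθ hθT => ?_⟩
  obtain ⟨M, hM⟩ := bdd_of_cadlag hT hf
  have hM0 : (0 : ℝ) ≤ M := le_trans (norm_nonneg _) (hM 0 ⟨le_refl 0, hT.le⟩)
  set S : Set ℝ := {x : ℝ | ∃ s u : ℝ, 0 ≤ s ∧ s < u ∧ u ≤ s + θ ∧ s + θ ≤ T ∧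
      x = ‖f u - f s‖} with hS
  set W : ℝ := sSup S with hW
  -- S is bounded above
  have hSbdd : BddAbove S := by
    refine ⟨2 * M, fun x hx => ?_⟩
    obtain ⟨s, u, hs0, hsu, huθ, hθT', hx⟩ := hx
    have hsT : s ∈ Set.Icc (0 : ℝ) T := ⟨hs0, by linarith⟩
    have huT : u ∈ Set.Icc (0 : ℝ) T := ⟨by linarith, by linarith⟩
    rw [hx]
    calc ‖f u - f s‖ ≤ ‖f u‖ + ‖f s‖ := norm_sub_le _ _
      _ ≤ 2 * M := by linarith [hM u huT, hM s hsT]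
  have hW0 : 0 ≤ W := Real.sSup_nonneg (by
    rintro x ⟨s, u, _, _, _, _, hx⟩; rw [hx]; exact norm_nonneg _)
  -- key: for 0 ≤ s < u ≤ s + θ ≤ T, |gmap u - gmap s| ≤ 2 W
  have key : ∀ s u : ℝ, 0 ≤ s → s < u → u ≤ s + θ → s + θ ≤ T →
      ‖Gam β f u - Gam β f s‖ ≤ 3 * W := by
    intro s u hs0 hsu huθ hsθT
    have hu0 : (0 : ℝ) ≤ u := le_of_lt (lt_of_le_of_lt hs0 hsu)
    haveI : Nonempty (Set.Icc (0 : ℝ) s) := ⟨⟨0, le_refl 0, hs0⟩⟩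
    haveI : Nonempty (Set.Icc (0 : ℝ) u) := ⟨⟨0, le_refl 0, hu0⟩⟩
    -- boundedness of the negp values over [0, u]
    have hbd : ∀ t : ℝ, 0 ≤ t → t ≤ T → BddAbove (Set.range fun v : Set.Icc (0 : ℝ) t =>
        negp (2 * β - (f v 0 + f v 1))) := by
      intro t ht0 htT
      refine ⟨2 * β + 2 * M, ?_⟩
      rintro x ⟨⟨v, hv⟩, rfl⟩
      have hvT : v ∈ Set.Icc (0 : ℝ) T := ⟨hv.1, hv.2.trans htT⟩
      have h1 : |f v 0| ≤ M := (comp_le_norm (f v) 0).trans (hM v hvT)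
      have h2 : |f v 1| ≤ M := (comp_le_norm (f v) 1).trans (hM v hvT)
      calc negp (2 * β - (f v 0 + f v 1)) ≤ |2 * β - (f v 0 + f v 1)| := negp_le_abs _
        _ ≤ 2 * β + 2 * M := by
            have h1' := abs_le.mp h1
            have h2' := abs_le.mp h2
            rw [abs_le]
            constructor <;> linarith
    have hbds := hbd s hs0 (by linarith)
    have hbdu := hbd u hu0 (by linarith)
    have hmono : gmap β f s ≤ gmap β f u := by
      apply ciSup_le
      rintro ⟨v, hv⟩
      exact le_ciSup hbdu ⟨v, hv.1, hv.2.trans hsu.le⟩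
    have hWmem : ∀ v : ℝ, s < v → v ≤ u → ‖f v - f s‖ ≤ W := fun v hv1 hv2 =>
      le_csSup hSbdd ⟨s, v, hs0, hv1, by linarith, hsθT, rfl⟩
    have hgs : ∀ v : ℝ, 0 ≤ v → v ≤ s →
        negp (2 * β - (f v 0 + f v 1)) ≤ gmap β f s := fun v hv1 hv2 =>
      le_ciSup hbds ⟨v, hv1, hv2⟩
    have hupper : gmap β f u ≤ gmap β f s + 2 * W := by
      apply ciSup_le
      rintro ⟨v, hv0, hvu⟩
      rcases le_or_gt v s with h | h
      · exact (hgs v hv0 h).trans (by linarith)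
      · have hlip := negp_lip (2 * β - (f v 0 + f v 1)) (2 * β - (f s 0 + f s 1))
        have hd0 : |f s 0 - f v 0| ≤ ‖f v - f s‖ := by
          have h' := comp_le_norm (f s - f v) 0
          rw [norm_sub_rev] at h'
          simpa using h'
        have hd1 : |f s 1 - f v 1| ≤ ‖f v - f s‖ := by
          have h' := comp_le_norm (f s - f v) 1
          rw [norm_sub_rev] at h'
          simpa using h'
        have habs : |(2 * β - (f v 0 + f v 1)) - (2 * β - (f s 0 + f s 1))|
            ≤ |f s 0 - f v 0| + |f s 1 - f v 1| := by
          have : (2 * β - (f v 0 + f v 1)) - (2 * β - (f s 0 + f s 1))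
              = (f s 0 - f v 0) + (f s 1 - f v 1) := by ring
          rw [this]
          exact abs_add_le _ _
        have hWv : ‖f v - f s‖ ≤ W := hWmem v h hvu
        have hgss : negp (2 * β - (f s 0 + f s 1)) ≤ gmap β f s :=
          hgs s hs0 le_rfl
        linarith
    have hgabs : |gmap β f u - gmap β f s| ≤ 2 * W :=
      abs_le.mpr ⟨by linarith, by linarith⟩
    have hfW : ‖f u - f s‖ ≤ W := hWmem u hsu le_rfl
    have hGam : Gam β f u - Gam β f s
        = (f u - f s) - (gmap β f u - gmap β f s) • e1 := by
      unfold Gam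
      rw [sub_smul]
      abel
    have he1 : ‖e1‖ = 1 := by
      unfold e1
      rw [EuclideanSpace.norm_single]
      norm_num
    calc ‖Gam β f u - Gam β f s‖
        = ‖(f u - f s) - (gmap β f u - gmap β f s) • e1‖ := by rw [hGam]
      _ ≤ ‖f u - f s‖ + ‖(gmap β f u - gmap β f s) • e1‖ := norm_sub_le _ _
      _ = ‖f u - f s‖ + |gmap β f u - gmap β f s| * ‖e1‖ := by
          rw [norm_smul, Real.norm_eq_abs]
      _ ≤ W + 2 * W := by rw [he1, mul_one]; linarith
      _ = 3 * W := by ring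
  apply Real.sSup_le
  · rintro x ⟨s, u, hs0, hsu, huθ, hsθT, rfl⟩
    exact key s u hs0 hsu huθ hsθT
  · linarith
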